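/- Let L be ℂ⁴ with standard basis e₁, e₂, e₃, e₄ and let [·,·] : L × L → L be the unique antisymmetric bilinear map with [e₁,e₂] = e₂, [e₂,e₃] = e₃, [e₄,e₂] = -e₄, and all other brackets of distinct basis vectors equal to zero (the 4-dimensional ω-Lie algebra L₁,₁). Then every local automorphism of (L, [·,·]) is an automorphism: if ψ : L → L is linear and for every x ∈ L there exists an automorphism φ of (L, [·,·]) with ψ(x) = φ(x), then ψ is an automorphism of (L, [·,·]). -/

import Mathlib

/-- The bracket of the 4-dimensional ω-Lie algebra `L₁,₁` on `ℂ⁴`: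
`[e₁,e₂] = e₂`, `[e₂,e₃] = e₃`, `[e₄,e₂] = -e₄`, all other brackets of
distinct basis vectors zero. -/
noncomputable def brL11 (x y : Fin 4 → ℂ) : Fin 4 → ℂ :=
  ![0,
    x 0 * y 1 - x 1 * y 0,
    x 1 * y 2 - x 2 * y 1,
    x 1 * y 3 - x 3 * y 1]

/-- An automorphism of `(ℂ⁴, brL11)`: a linear equivalence preserving the bracket. -/
def IsAutL11 (φ : (Fin 4 → ℂ) ≃ₗ[ℂ] (Fin 4 → ℂ)) : Prop :=
  ∀ x y : Fin 4 → ℂ, φ (brL11 x y) = brL11 (φ x) (φ y)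

section aux

lemma brL11_apply0 (x y : Fin 4 → ℂ) : brL11 x y 0 = 0 := rfl
lemma brL11_apply1 (x y : Fin 4 → ℂ) : brL11 x y 1 = x 0 * y 1 - x 1 * y 0 := rfl
lemma brL11_apply2 (x y : Fin 4 → ℂ) : brL11 x y 2 = x 1 * y 2 - x 2 * y 1 := rfl
lemma brL11_apply3 (x y : Fin 4 → ℂ) : brL11 x y 3 = x 1 * y 3 - x 3 * y 1 := rfl

/-- Every vector with vanishing 0-th coordinate is a bracket. -/
lemma br_fix (x : Fin 4 → ℂ) (h : x 0 = 0) : brL11 ![1,1,0,0] x = x := by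
  funext i
  fin_cases i <;> simp [brL11, h]

lemma aut_V (φ : (Fin 4 → ℂ) ≃ₗ[ℂ] (Fin 4 → ℂ)) (h : IsAutL11 φ)
    (x : Fin 4 → ℂ) (hx : x 0 = 0) : φ x 0 = 0 := by
  have h1 : φ x = brL11 (φ ![1,1,0,0]) (φ x) := by
    conv_lhs => rw [← br_fix x hx, h]
  rw [h1]
  exact brL11_apply0 _ _

/-- Every vector with vanishing coordinates 0, 1 equals `[e₂, ·]`. -/
lemma br_fix2 (x : Fin 4 → ℂ) (h0 : x 0 = 0) (h1 : x 1 = 0) :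
    brL11 ![0,1,0,0] x = x := by
  funext i
  fin_cases i <;> simp [brL11, h0, h1]

lemma aut_W (φ : (Fin 4 → ℂ) ≃ₗ[ℂ] (Fin 4 → ℂ)) (h : IsAutL11 φ)
    (x : Fin 4 → ℂ) (h0 : x 0 = 0) (h1 : x 1 = 0) :
    φ x 0 = 0 ∧ φ x 1 = 0 := by
  have hx0 : φ x 0 = 0 := aut_V φ h x h0
  have he1 : φ ![0,1,0,0] 0 = 0 := aut_V φ h _ (by simp)
  have h2 : φ x = brL11 (φ ![0,1,0,0]) (φ x) := by
    conv_lhs => rw [← br_fix2 x h0 h1, h]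
  have h3 : φ x 1 = φ ![0,1,0,0] 0 * φ x 1 - φ ![0,1,0,0] 1 * φ x 0 := by
    conv_lhs => rw [h2, brL11_apply1]
  rw [he1, hx0] at h3
  refine ⟨hx0, by simpa using h3⟩

lemma aut_ne (φ : (Fin 4 → ℂ) ≃ₗ[ℂ] (Fin 4 → ℂ)) (x : Fin 4 → ℂ) (hx : x ≠ 0) :
    φ x ≠ 0 := by
  intro h
  exact hx (by simpa using congrArg φ.symm h)

lemma E2_ne : (![0,0,1,0] : Fin 4 → ℂ) ≠ 0 := by
  intro h
  simpa using congrFun h 2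

lemma E3_ne : (![0,0,0,1] : Fin 4 → ℂ) ≠ 0 := by
  intro h
  simpa using congrFun h 3

lemma W_ne (a b : ℂ) (hab : ¬ (a = 0 ∧ b = 0)) : (![0,0,a,b] : Fin 4 → ℂ) ≠ 0 := by
  intro h
  exact hab ⟨by simpa using congrFun h 2, by simpa using congrFun h 3⟩

lemma W_eq (x : Fin 4 → ℂ) (h0 : x 0 = 0) (h1 : x 1 = 0) : x = ![0,0,x 2,x 3] := by
  funext i; fin_cases i <;> simp [h0, h1]

/-- Structure of automorphisms on the basis vectors. -/
lemma aut_facts (φ : (Fin 4 → ℂ) ≃ₗ[ℂ] (Fin 4 → ℂ)) (h : IsAutL11 φ) :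
    φ ![1,0,0,0] 0 = 1 ∧ φ ![1,0,0,0] 1 = 0 ∧
    φ ![0,1,0,0] 0 = 0 ∧ φ ![0,1,0,0] 1 = 1 ∧
    φ ![0,1,0,0] 2 = -(φ ![1,0,0,0] 2) ∧ φ ![0,1,0,0] 3 = -(φ ![1,0,0,0] 3) ∧
    φ ![0,0,1,0] 0 = 0 ∧ φ ![0,0,1,0] 1 = 0 ∧
    φ ![0,0,0,1] 0 = 0 ∧ φ ![0,0,0,1] 1 = 0 := by
  have hE1V : φ ![0,1,0,0] 0 = 0 := aut_V φ h _ (by simp)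
  have hE2W := aut_W φ h ![0,0,1,0] (by simp) (by simp)
  have hE3W := aut_W φ h ![0,0,0,1] (by simp) (by simp)
  -- (φ E2) 2 or (φ E2) 3 nonzero
  have hE2ne : ¬ (φ ![0,0,1,0] 2 = 0 ∧ φ ![0,0,1,0] 3 = 0) := by
    intro ⟨h2, h3⟩
    apply aut_ne φ _ E2_ne
    have := W_eq (φ ![0,0,1,0]) hE2W.1 hE2W.2
    rw [h2, h3] at this
    rw [this]
    funext i; fin_cases i <;> simp
  -- relation φ E2 = [φ E1, φ E2]
  have hb12 : (brL11 ![0,1,0,0] ![0,0,1,0] : Fin 4 → ℂ) = ![0,0,1,0] := by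
    funext i; fin_cases i <;> simp [brL11]
  have h12 : φ ![0,0,1,0] = brL11 (φ ![0,1,0,0]) (φ ![0,0,1,0]) := by
    conv_lhs => rw [← hb12, h]
  have h12c2 : φ ![0,0,1,0] 2
      = φ ![0,1,0,0] 1 * φ ![0,0,1,0] 2 - φ ![0,1,0,0] 2 * φ ![0,0,1,0] 1 := by
    conv_lhs => rw [h12, brL11_apply2]
  have h12c3 : φ ![0,0,1,0] 3
      = φ ![0,1,0,0] 1 * φ ![0,0,1,0] 3 - φ ![0,1,0,0] 3 * φ ![0,0,1,0] 1 := by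
    conv_lhs => rw [h12, brL11_apply3]
  rw [hE2W.2] at h12c2 h12c3
  -- hence (φ E1) 1 = 1
  have hE11 : φ ![0,1,0,0] 1 = 1 := by
    by_contra hne
    apply hE2ne
    constructor
    · have : φ ![0,0,1,0] 2 * (1 - φ ![0,1,0,0] 1) = 0 := by linear_combination h12c2
      rcases mul_eq_zero.mp this with h' | h'
      · exact h'
      · exact absurd (by linear_combination -h') hne
    · have : φ ![0,0,1,0] 3 * (1 - φ ![0,1,0,0] 1) = 0 := by linear_combination h12c3
      rcases mul_eq_zero.mp this with h' | h'
      · exact h'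
      · exact absurd (by linear_combination -h') hne
  -- relation φ E1 = [φ E0, φ E1]
  have hb01 : (brL11 ![1,0,0,0] ![0,1,0,0] : Fin 4 → ℂ) = ![0,1,0,0] := by
    funext i; fin_cases i <;> simp [brL11]
  have h01 : φ ![0,1,0,0] = brL11 (φ ![1,0,0,0]) (φ ![0,1,0,0]) := by
    conv_lhs => rw [← hb01, h]
  have h01c1 : φ ![0,1,0,0] 1
      = φ ![1,0,0,0] 0 * φ ![0,1,0,0] 1 - φ ![1,0,0,0] 1 * φ ![0,1,0,0] 0 := by
    conv_lhs => rw [h01, brL11_apply1]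
  rw [hE11, hE1V] at h01c1
  have hE00 : φ ![1,0,0,0] 0 = 1 := by linear_combination -h01c1
  -- relation 0 = [φ E0, φ E2] gives (φ E0) 1 = 0
  have hb02 : (brL11 ![1,0,0,0] ![0,0,1,0] : Fin 4 → ℂ) = 0 := by
    funext i; fin_cases i <;> simp [brL11]
  have h02 : (0 : Fin 4 → ℂ) = brL11 (φ ![1,0,0,0]) (φ ![0,0,1,0]) := by
    conv_lhs => rw [← (map_zero φ), ← hb02, h]
  have h02c2 : (0 : ℂ)
      = φ ![1,0,0,0] 1 * φ ![0,0,1,0] 2 - φ ![1,0,0,0] 2 * φ ![0,0,1,0] 1 := by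
    conv_lhs => rw [show (0:ℂ) = (0 : Fin 4 → ℂ) 2 from rfl, h02, brL11_apply2]
  have h02c3 : (0 : ℂ)
      = φ ![1,0,0,0] 1 * φ ![0,0,1,0] 3 - φ ![1,0,0,0] 3 * φ ![0,0,1,0] 1 := by
    conv_lhs => rw [show (0:ℂ) = (0 : Fin 4 → ℂ) 3 from rfl, h02, brL11_apply3]
  rw [hE2W.2] at h02c2 h02c3
  have hE01 : φ ![1,0,0,0] 1 = 0 := by
    by_contra hne
    apply hE2ne
    constructor
    · have : φ ![1,0,0,0] 1 * φ ![0,0,1,0] 2 = 0 := by linear_combination -h02c2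
      rcases mul_eq_zero.mp this with h' | h'
      · exact absurd h' hne
      · exact h'
    · have : φ ![1,0,0,0] 1 * φ ![0,0,1,0] 3 = 0 := by linear_combination -h02c3
      rcases mul_eq_zero.mp this with h' | h'
      · exact absurd h' hne
      · exact h'
  -- components 2, 3 of φ E1
  have h01c2 : φ ![0,1,0,0] 2
      = φ ![1,0,0,0] 1 * φ ![0,1,0,0] 2 - φ ![1,0,0,0] 2 * φ ![0,1,0,0] 1 := by
    conv_lhs => rw [h01, brL11_apply2]
  have h01c3 : φ ![0,1,0,0] 3
      = φ ![1,0,0,0] 1 * φ ![0,1,0,0] 3 - φ ![1,0,0,0] 3 * φ ![0,1,0,0] 1 := by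
    conv_lhs => rw [h01, brL11_apply3]
  rw [hE01, hE11] at h01c2 h01c3
  exact ⟨hE00, hE01, hE1V, hE11, by linear_combination h01c2, by linear_combination h01c3,
    hE2W.1, hE2W.2, hE3W.1, hE3W.2⟩

end aux

/-- Every local automorphism of `L₁,₁` is an automorphism. -/
theorem stmt_11 (ψ : (Fin 4 → ℂ) →ₗ[ℂ] (Fin 4 → ℂ))
    (hloc : ∀ x : Fin 4 → ℂ, ∃ φ : (Fin 4 → ℂ) ≃ₗ[ℂ] (Fin 4 → ℂ),
      IsAutL11 φ ∧ ψ x = φ x) :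
    Function.Bijective ψ ∧ ∀ x y : Fin 4 → ℂ, ψ (brL11 x y) = brL11 (ψ x) (ψ y) := by
  obtain ⟨φ0, hφ0, hψ0⟩ := hloc ![1,0,0,0]
  obtain ⟨φ1, hφ1, hψ1⟩ := hloc ![0,1,0,0]
  obtain ⟨φ2, hφ2, hψ2⟩ := hloc ![0,0,1,0]
  obtain ⟨φ3, hφ3, hψ3⟩ := hloc ![0,0,0,1]
  obtain ⟨φ01, hφ01, hψ01⟩ := hloc (![1,0,0,0] + ![0,1,0,0])
  obtain ⟨f00, f01, _⟩ := aut_facts φ0 hφ0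
  obtain ⟨_, _, f10, f11, _⟩ := aut_facts φ1 hφ1
  obtain ⟨_, _, _, _, _, _, f20, f21, _⟩ := aut_facts φ2 hφ2
  obtain ⟨_, _, _, _, _, _, _, _, f30, f31⟩ := aut_facts φ3 hφ3
  obtain ⟨g00, g01, g10, g11, g12, g13, _⟩ := aut_facts φ01 hφ01
  set p := ψ ![1,0,0,0] 2 with hp
  set q := ψ ![1,0,0,0] 3 with hq
  set a := ψ ![0,0,1,0] 2 with ha
  set b := ψ ![0,0,1,0] 3 with hb
  set c := ψ ![0,0,0,1] 2 with hc
  set d := ψ ![0,0,0,1] 3 with hd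
  -- basic component facts about ψ on the basis
  have k00 : ψ ![1,0,0,0] 0 = 1 := by rw [hψ0]; exact f00
  have k01 : ψ ![1,0,0,0] 1 = 0 := by rw [hψ0]; exact f01
  have k10 : ψ ![0,1,0,0] 0 = 0 := by rw [hψ1]; exact f10
  have k11 : ψ ![0,1,0,0] 1 = 1 := by rw [hψ1]; exact f11
  have k20 : ψ ![0,0,1,0] 0 = 0 := by rw [hψ2]; exact f20
  have k21 : ψ ![0,0,1,0] 1 = 0 := by rw [hψ2]; exact f21
  have k30 : ψ ![0,0,0,1] 0 = 0 := by rw [hψ3]; exact f30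
  have k31 : ψ ![0,0,0,1] 1 = 0 := by rw [hψ3]; exact f31
  -- ψ(E0) + ψ(E1) has components 2, 3 equal to zero
  have hsum : ψ ![1,0,0,0] + ψ ![0,1,0,0] = φ01 ![1,0,0,0] + φ01 ![0,1,0,0] := by
    rw [← map_add, ← map_add, hψ01]
  have k12 : ψ ![0,1,0,0] 2 = -p := by
    have := congrFun hsum 2
    simp only [Pi.add_apply] at this
    rw [g12] at this
    rw [hp]; linear_combination this
  have k13 : ψ ![0,1,0,0] 3 = -q := by
    have := congrFun hsum 3
    simp only [Pi.add_apply] at this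
    rw [g13] at this
    rw [hq]; linear_combination this
  -- nondegeneracy: a*d - b*c ≠ 0
  have hne2 : ¬ (a = 0 ∧ b = 0) := by
    rintro ⟨ha0, hb0⟩
    apply aut_ne φ2 _ E2_ne
    rw [← hψ2]
    have := W_eq (ψ ![0,0,1,0]) k20 k21
    rw [← ha, ← hb, ha0, hb0] at this
    rw [this]; funext i; fin_cases i <;> simp
  have hψW : ∀ u v : ℂ, ψ ![0,0,u,v] = ![0,0,u*a+v*c,u*b+v*d] := by
    intro u v
    have hv : (![0,0,u,v] : Fin 4 → ℂ) = u • ![0,0,1,0] + v • ![0,0,0,1] := by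
      funext i; fin_cases i <;> simp
    rw [hv, map_add, map_smul, map_smul]
    funext i
    fin_cases i <;>
      simp [k20, k21, k30, k31, ← ha, ← hb, ← hc, ← hd, mul_comm]
  have hdet : a * d - b * c ≠ 0 := by
    intro h0
    by_cases hbd : b = 0 ∧ d = 0
    · -- then a ≠ 0; vector c•E2 - a•E3 is nonzero and killed
      have hane : a ≠ 0 := fun h' => hne2 ⟨h', hbd.1⟩
      have hker : ψ ![0,0,c,-a] = 0 := by
        rw [hψW]
        funext i; fin_cases i <;> simp [hbd.1, hbd.2] <;> ring
      obtain ⟨φk, hφk, hψk⟩ := hloc ![0,0,c,-a]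
      apply aut_ne φk ![0,0,c,-a] (W_ne _ _ ?_) (by rw [← hψk]; exact hker)
      rintro ⟨-, h3⟩
      exact hane (by simpa using h3)
    · have hker : ψ ![0,0,d,-b] = 0 := by
        rw [hψW]
        funext i; fin_cases i <;> simp <;> ring_nf <;> linear_combination h0
      obtain ⟨φk, hφk, hψk⟩ := hloc ![0,0,d,-b]
      apply aut_ne φk ![0,0,d,-b] (W_ne _ _ ?_) (by rw [← hψk]; exact hker)
      rintro ⟨h2, h3⟩
      exact hbd ⟨by simpa using h3, h2⟩
  -- closed formula for ψ
  have key : ∀ x : Fin 4 → ℂ,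
      ψ x = ![x 0, x 1, p*(x 0) - p*(x 1) + a*(x 2) + c*(x 3),
        q*(x 0) - q*(x 1) + b*(x 2) + d*(x 3)] := by
    intro x
    have hx : x = x 0 • ![1,0,0,0] + x 1 • ![0,1,0,0] + x 2 • ![0,0,1,0] + x 3 • ![0,0,0,1] := by
      funext i; fin_cases i <;> simp
    conv_lhs => rw [hx]
    rw [map_add, map_add, map_add, map_smul, map_smul, map_smul, map_smul]
    funext i
    fin_cases i <;>
      simp [k00, k01, k10, k11, k20, k21, k30, k31, k12, k13,
        ← hp, ← hq, ← ha, ← hb, ← hc, ← hd] <;> ring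
  constructor
  · -- bijective
    rw [Function.Bijective, ← LinearMap.injective_iff_surjective, and_self]
    rw [injective_iff_map_eq_zero]
    intro x hx
    have h0 := congrFun hx 0
    have h1 := congrFun hx 1
    have h2 := congrFun hx 2
    have h3 := congrFun hx 3
    rw [key x] at h0 h1 h2 h3
    simp only [Pi.zero_apply] at h0 h1 h2 h3
    norm_num at h0 h1 h2 h3
    rw [h0, h1] at h2 h3
    change p * 0 - p * 0 + a * x 2 + c * x 3 = 0 at h2
    change q * 0 - q * 0 + b * x 2 + d * x 3 = 0 at h3
    have hx2 : x 2 = 0 := by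
      have : (a * d - b * c) * x 2 = d * (p*0 - p*0 + a*(x 2)+c*(x 3)) - c * (q*0 - q*0 + b*(x 2)+d*(x 3)) := by ring
      rw [h2, h3] at this
      simpa [hdet] using this
    have hx3 : x 3 = 0 := by
      have : (a * d - b * c) * x 3 = a * (q*0 - q*0 + b*(x 2)+d*(x 3)) - b * (p*0 - p*0 + a*(x 2)+c*(x 3)) := by ring
      rw [h2, h3] at this
      simpa [hdet] using this
    funext i; fin_cases i <;> simp [h0, h1, hx2, hx3]
  · -- bracket preserving
    intro x y
    rw [key, key, key]
    funext i
    fin_cases i <;> simp [brL11] <;> ring
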